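/- Let Y ~ Bin(n, θ) with n ≥ 1 and θ ∈ [0,1], and let h : {0,…,n} → ℝ. Define T₂h(y) := h(y) − 1{y < n} · Σ_{j=0}^{y} h(y−j)·(−1)^j · [y!/(y−j)!]·[(n−y)!/(n−y+j)!]. Then θ·E[h(Y)] − E[T₂h(Y)] = (1−θ)·θ^n·(−1)^{n+1} · Δh, where Δh := Σ_{j=0}^{n} h(j)(−1)^j C(n,j). -/

import Mathlib

section Aux

lemma chooseId (n y j : ℕ) (hj : j ≤ y) (hy : y ≤ n) :
    ((y.factorial : ℝ) / ((y - j).factorial : ℝ))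
      * (((n - y).factorial : ℝ) / ((n - y + j).factorial : ℝ)) * (n.choose y : ℝ)
    = (n.choose (y - j) : ℝ) := by
  have h1 : (n.choose y : ℝ) = n.factorial / (y.factorial * (n - y).factorial) :=
    Nat.cast_choose ℝ hy
  have h2 : (n.choose (y - j) : ℝ)
      = n.factorial / ((y - j).factorial * (n - (y - j)).factorial) :=
    Nat.cast_choose ℝ (le_trans (Nat.sub_le _ _) hy)
  have h3 : n - (y - j) = n - y + j := by omega
  rw [h1, h2, h3]
  have a1 : ((y.factorial : ℝ)) ≠ 0 := Nat.cast_ne_zero.mpr y.factorial_ne_zero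
  have a2 : (((y - j).factorial : ℝ)) ≠ 0 := Nat.cast_ne_zero.mpr (y - j).factorial_ne_zero
  have a3 : (((n - y).factorial : ℝ)) ≠ 0 := Nat.cast_ne_zero.mpr (n - y).factorial_ne_zero
  have a4 : (((n - y + j).factorial : ℝ)) ≠ 0 := Nat.cast_ne_zero.mpr (n - y + j).factorial_ne_zero
  field_simp

lemma telescope (n k : ℕ) (θ : ℝ) (hk : k ≤ n) :
    ∑ y ∈ Finset.Ico k n, (-θ) ^ y * (1 - θ) ^ (n - y)
      = (-θ) ^ k * (1 - θ) ^ (n - k + 1) - (-θ) ^ n * (1 - θ) := by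
  have key : ∀ m, m ≤ n → ∑ y ∈ Finset.range m, (-θ) ^ y * (1 - θ) ^ (n - y)
      = (-θ) ^ 0 * (1 - θ) ^ (n - 0 + 1) - (-θ) ^ m * (1 - θ) ^ (n - m + 1) := by
    intro m hm
    induction m with
    | zero => simp
    | succ m ih =>
      have hm' : m ≤ n := Nat.le_of_succ_le hm
      rw [Finset.sum_range_succ, ih hm']
      have h1 : n - m = (n - (m + 1)) + 1 := by omega
      rw [h1]
      ring
  have h1 := key n le_rfl
  have h2 := key k hk
  rw [Finset.sum_Ico_eq_sub _ hk, h1, h2]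
  simp

lemma swapSum (n : ℕ) (F : ℕ → ℕ → ℝ) :
    ∑ y ∈ Finset.range n, ∑ k ∈ Finset.range (y + 1), F y k
      = ∑ k ∈ Finset.range n, ∑ y ∈ Finset.Ico k n, F y k := by
  induction n with
  | zero => simp
  | succ n ih =>
    rw [Finset.sum_range_succ, ih]
    have hcongr : ∀ k ∈ Finset.range (n + 1),
        ∑ y ∈ Finset.Ico k (n + 1), F y k = (∑ y ∈ Finset.Ico k n, F y k) + F n k := by
      intro k hk
      exact Finset.sum_Ico_succ_top (Nat.lt_succ_iff.mp (Finset.mem_range.mp hk)) _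
    rw [Finset.sum_congr rfl hcongr, Finset.sum_add_distrib,
      Finset.sum_range_succ (fun k => ∑ y ∈ Finset.Ico k n, F y k), Finset.Ico_self,
      Finset.sum_empty, add_zero]

end Aux

/-- Binomial expectation of `f` under `Bin(n, θ)`. -/
noncomputable def binomExp (n : ℕ) (θ : ℝ) (f : ℕ → ℝ) : ℝ :=
  ∑ k ∈ Finset.range (n + 1), f k * (n.choose k : ℝ) * θ ^ k * (1 - θ) ^ (n - k)

/-- The transform `T₂h(y) = h(y) − 1{y<n}·Σ_{j=0}^{y} h(y−j)(−1)^j [y!/(y−j)!][(n−y)!/(n−y+j)!]`. -/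
noncomputable def T2 (n : ℕ) (h : ℕ → ℝ) (y : ℕ) : ℝ :=
  h y - (if y < n then
    ∑ j ∈ Finset.range (y + 1),
      h (y - j) * (-1 : ℝ) ^ j * ((y.factorial : ℝ) / ((y - j).factorial : ℝ))
        * (((n - y).factorial : ℝ) / ((n - y + j).factorial : ℝ))
  else 0)

/-- Alternating binomial sum `Δh = Σ_{j=0}^{n} h(j)(−1)^j C(n,j)`. -/
noncomputable def deltaH (n : ℕ) (h : ℕ → ℝ) : ℝ :=
  ∑ j ∈ Finset.range (n + 1), h j * (-1 : ℝ) ^ j * (n.choose j : ℝ)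

/-- Bias of the `T₂` transform: `θ·E[h(Y)] − E[T₂h(Y)] = (1−θ)θ^n(−1)^{n+1}·Δh`. -/
theorem T2_bias (n : ℕ) (hn : 1 ≤ n) (θ : ℝ) (hθ : θ ∈ Set.Icc (0 : ℝ) 1) (h : ℕ → ℝ) :
    θ * binomExp n θ h - binomExp n θ (T2 n h)
      = (1 - θ) * θ ^ n * (-1 : ℝ) ^ (n + 1) * deltaH n h := by
  have hbE : binomExp n θ (T2 n h)
      = (∑ k ∈ Finset.range (n + 1), h k * (n.choose k : ℝ) * θ ^ k * (1 - θ) ^ (n - k))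
        - ∑ y ∈ Finset.range n, ∑ k ∈ Finset.range (y + 1),
            (h k * (-1 : ℝ) ^ k * (n.choose k : ℝ)) * ((-θ) ^ y * (1 - θ) ^ (n - y)) := by
    unfold binomExp T2
    simp only [sub_mul]
    rw [Finset.sum_sub_distrib]
    congr 1
    rw [Finset.sum_range_succ, if_neg (lt_irrefl n)]
    simp only [zero_mul, add_zero]
    apply Finset.sum_congr rfl
    intro y hy
    have hy' := Finset.mem_range.mp hy
    rw [if_pos hy', Finset.sum_mul, Finset.sum_mul, Finset.sum_mul,
      ← Finset.sum_range_reflect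
        (fun k => (h k * (-1 : ℝ) ^ k * (n.choose k : ℝ)) * ((-θ) ^ y * (1 - θ) ^ (n - y)))
        (y + 1)]
    apply Finset.sum_congr rfl
    intro j hj
    have hj' : j ≤ y := Nat.lt_succ_iff.mp (Finset.mem_range.mp hj)
    simp only [Nat.add_sub_cancel]
    have hc := chooseId n y j hj' (le_of_lt hy')
    have hsign : (-1 : ℝ) ^ (y - j) * (-1 : ℝ) ^ y = (-1 : ℝ) ^ j := by
      rw [← pow_add, show y - j + y = 2 * (y - j) + j by omega, pow_add, pow_mul,
        neg_one_sq, one_pow, one_mul]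
    rw [neg_pow θ y]
    linear_combination (h (y - j) * (-1 : ℝ) ^ j * θ ^ y * (1 - θ) ^ (n - y)) * hc
      - (h (y - j) * (n.choose (y - j) : ℝ) * θ ^ y * (1 - θ) ^ (n - y)) * hsign
  rw [hbE, swapSum n (fun y k =>
    (h k * (-1 : ℝ) ^ k * (n.choose k : ℝ)) * ((-θ) ^ y * (1 - θ) ^ (n - y)))]
  have hTel : ∀ k ∈ Finset.range n,
      ∑ y ∈ Finset.Ico k n,
          (h k * (-1 : ℝ) ^ k * (n.choose k : ℝ)) * ((-θ) ^ y * (1 - θ) ^ (n - y))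
        = (1 - θ) * θ ^ n * ((-1 : ℝ) ^ n * (-1))
            * (h k * (-1 : ℝ) ^ k * (n.choose k : ℝ))
          - (θ - 1) * (h k * (n.choose k : ℝ) * θ ^ k * (1 - θ) ^ (n - k)) := by
    intro k hk
    have hk' := Finset.mem_range.mp hk
    rw [← Finset.mul_sum, telescope n k θ (le_of_lt hk')]
    have hmk : (-1 : ℝ) ^ k * (-1 : ℝ) ^ k = 1 := by
      rw [← pow_add, show k + k = 2 * k by omega, pow_mul, neg_one_sq, one_pow]
    rw [neg_pow θ k, neg_pow θ n, pow_succ (1 - θ) (n - k)]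
    linear_combination (h k * (n.choose k : ℝ) * θ ^ k * (1 - θ) ^ (n - k) * (1 - θ)) * hmk
  rw [Finset.sum_congr rfl hTel, Finset.sum_sub_distrib, ← Finset.mul_sum, ← Finset.mul_sum]
  unfold binomExp deltaH
  rw [Finset.sum_range_succ, Finset.sum_range_succ
    (f := fun j => h j * (-1 : ℝ) ^ j * (n.choose j : ℝ)), Nat.sub_self, Nat.choose_self,
    pow_zero, Nat.cast_one, pow_succ (-1 : ℝ) n]
  have hm : (-1 : ℝ) ^ n * (-1 : ℝ) ^ n = 1 := by
    rw [← pow_add, show n + n = 2 * n by omega, pow_mul, neg_one_sq, one_pow]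
  linear_combination (h n * θ ^ n * (1 - θ)) * hm
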